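/- Let g and h be integers with g ≥ h ≥ 2. There exists a constant c = c(g,h) > 0 such that for every sufficiently large positive integer n there exists a weak-C_h[g] set A ⊆ {1,…,n} with |A| ≥ c · n^{(1 - 1/h)(1 - 1/g)(1 + 1/(hg - 1))}. -/

import Mathlib

/-- `A` is a weak-`C_h[g]` set: there do not exist a set `X` of `h` integers and `g` pairwise
distinct integers `k_1, …, k_g` such that the translates `X + k_1, …, X + k_g` are pairwise
disjoint and each `X + k_i ⊆ A`. -/
def IsWeakChgSet (h g : ℕ) (A : Set ℤ) : Prop :=
  ¬ ∃ (X : Finset ℤ) (k : Fin g → ℤ), X.card = h ∧ Function.Injective k ∧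
      (∀ i j : Fin g, i ≠ j →
        Disjoint (X.image (· + k i)) (X.image (· + k j))) ∧
      ∀ i : Fin g, ∀ x ∈ X, x + k i ∈ A

/-- `U` is the union of `g` pairwise disjoint translates of an `h`-set. -/
def BadSet' (h g : ℕ) (U : Finset ℤ) : Prop :=
  ∃ (X : Finset ℤ) (k : Fin g → ℤ), X.card = h ∧ Function.Injective k ∧
    (∀ i j : Fin g, i ≠ j →
      Disjoint (X.image (· + k i)) (X.image (· + k j))) ∧
    U = Finset.univ.biUnion (fun i => X.image (· + k i))

open Classical in
noncomputable def badF (h g : ℕ) (A : Finset ℤ) : Finset (Finset ℤ) :=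
  A.powerset.filter (BadSet' h g)

lemma mem_badF {h g : ℕ} {A U : Finset ℤ} :
    U ∈ badF h g A ↔ U ⊆ A ∧ BadSet' h g U := by
  classical
  simp [badF, Finset.mem_filter, Finset.mem_powerset]

lemma BadSet'.card_eq {h g : ℕ} {U : Finset ℤ} (hU : BadSet' h g U) :
    U.card = g * h := by
  obtain ⟨X, k, hX, hk, hdisj, rfl⟩ := hU
  rw [Finset.card_biUnion (fun i _ j _ hij => hdisj i j hij)]
  have : ∀ i : Fin g, (X.image (· + k i)).card = h := fun i => by
    rw [Finset.card_image_of_injective _ (add_left_injective (k i)), hX]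
  rw [Finset.sum_congr rfl (fun i _ => this i)]
  simp [Finset.sum_const, mul_comm]

lemma BadSet'.nonempty {h g : ℕ} (hh : 1 ≤ h) (hg : 1 ≤ g) {U : Finset ℤ}
    (hU : BadSet' h g U) : U.Nonempty := by
  rw [← Finset.card_pos, hU.card_eq]
  positivity

/-- If `A` contains no bad subset then `A` is weak. -/
lemma weak_of_badF_empty {h g : ℕ} {A : Finset ℤ}
    (hA : badF h g A = ∅) : IsWeakChgSet h g ↑A := by
  rintro ⟨X, k, hX, hk, hdisj, hmem⟩
  have : (Finset.univ.biUnion (fun i => X.image (· + k i))) ∈ badF h g A := by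
    rw [mem_badF]
    refine ⟨?_, X, k, hX, hk, hdisj, rfl⟩
    intro u hu
    simp only [Finset.mem_biUnion, Finset.mem_image, Finset.mem_univ, true_and] at hu
    obtain ⟨i, x, hx, rfl⟩ := hu
    exact_mod_cast hmem i x hx
  rw [hA] at this
  exact absurd this (Finset.notMem_empty _)


lemma image_shift (X : Finset ℤ) (a b : ℤ) :
    (X.image (· + a)).image (· + (b - a)) = X.image (· + b) := by
  rw [Finset.image_image]
  congr 1
  funext x
  simp only [Function.comp]
  ring

lemma biUnion_fin_succ {g' : ℕ} (t : Fin (g' + 1) → Finset ℤ) :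
    Finset.univ.biUnion t = t 0 ∪ Finset.univ.biUnion (fun j : Fin g' => t j.succ) := by
  ext u
  simp only [Finset.mem_biUnion, Finset.mem_union, Finset.mem_univ, true_and]
  constructor
  · rintro ⟨i, hi⟩
    rcases Fin.eq_zero_or_eq_succ i with rfl | ⟨j, rfl⟩
    · exact Or.inl hi
    · exact Or.inr ⟨j, hi⟩
  · rintro (hi | ⟨j, hj⟩)
    · exact ⟨0, hi⟩
    · exact ⟨j.succ, hj⟩


lemma badF_card_le (h g' n : ℕ) (hh : 1 ≤ h) :
    (badF h (g' + 1) (Finset.Icc (1 : ℤ) n)).card ≤ n.choose h * (2 * n + 1) ^ g' := by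
  classical
  set T : Finset ℤ := Finset.Icc (1 : ℤ) n with hT
  -- the encoding map
  set f : Finset ℤ → Finset ℤ × (Fin g' → ℤ) := fun U =>
    if hU : BadSet' h (g' + 1) U then
      (hU.choose.image (· + hU.choose_spec.choose 0),
        fun j => hU.choose_spec.choose j.succ - hU.choose_spec.choose 0)
    else (∅, fun _ => 0) with hf
  -- recovery: U is determined by f U
  have hrec : ∀ U : Finset ℤ, BadSet' h (g' + 1) U →
      U = (f U).1 ∪ Finset.univ.biUnion (fun j : Fin g' => (f U).1.image (· + (f U).2 j)) := by
    intro U hU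
    rw [hf]
    simp only [dif_pos hU]
    obtain ⟨hX, hk, hdisj, hUeq⟩ := hU.choose_spec.choose_spec
    set X := hU.choose
    set k := hU.choose_spec.choose
    have himg : ∀ j : Fin g',
        (X.image (· + k 0)).image (· + (k j.succ - k 0)) = X.image (· + k j.succ) :=
      fun j => image_shift X (k 0) (k j.succ)
    calc U = Finset.univ.biUnion (fun i => X.image (· + k i)) := hUeq
      _ = _ := by
        rw [biUnion_fin_succ (fun i => X.image (· + k i))]
        congr 1
        exact (Finset.biUnion_congr rfl (fun j _ => (himg j).symm))
  have hcard : ∀ U ∈ badF h (g' + 1) T,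
      f U ∈ (Finset.powersetCard h T) ×ˢ
        (Fintype.piFinset fun _ : Fin g' => Finset.Icc (-(n : ℤ)) n) := by
    intro U hU
    rw [mem_badF] at hU
    obtain ⟨hUT, hbad⟩ := hU
    rw [Finset.mem_product]
    have hfU : f U = (hbad.choose.image (· + hbad.choose_spec.choose 0),
        fun j : Fin g' => hbad.choose_spec.choose j.succ - hbad.choose_spec.choose 0) := by
      rw [hf]; simp only [dif_pos hbad]
    obtain ⟨hX, hk, hdisj, hUeq⟩ := hbad.choose_spec.choose_spec
    set X := hbad.choose
    set k := hbad.choose_spec.choose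
    have hsub : ∀ i : Fin (g' + 1), X.image (· + k i) ⊆ T := by
      intro i
      refine subset_trans ?_ hUT
      rw [hUeq]
      exact Finset.subset_biUnion_of_mem (fun i => X.image (· + k i)) (Finset.mem_univ i)
    constructor
    · rw [hfU]
      dsimp only
      rw [Finset.mem_powersetCard]
      exact ⟨hsub 0, by rw [Finset.card_image_of_injective _ (add_left_injective _), hX]⟩
    · rw [hfU]
      dsimp only
      rw [Fintype.mem_piFinset]
      intro j
      obtain ⟨x, hx⟩ : X.Nonempty := Finset.card_pos.mp (by omega)
      have h1 : x + k 0 ∈ T := hsub 0 (Finset.mem_image_of_mem _ hx)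
      have h2 : x + k j.succ ∈ T := hsub j.succ (Finset.mem_image_of_mem _ hx)
      rw [hT, Finset.mem_Icc] at h1 h2
      rw [Finset.mem_Icc]
      omega
  have hinj : ∀ U₁ ∈ badF h (g' + 1) T, ∀ U₂ ∈ badF h (g' + 1) T,
      f U₁ = f U₂ → U₁ = U₂ := by
    intro U₁ h₁ U₂ h₂ hfeq
    rw [mem_badF] at h₁ h₂
    rw [hrec U₁ h₁.2, hrec U₂ h₂.2, hfeq]
  calc (badF h (g' + 1) T).card
      ≤ ((Finset.powersetCard h T) ×ˢ
          (Fintype.piFinset fun _ : Fin g' => Finset.Icc (-(n : ℤ)) n)).card :=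
        Finset.card_le_card_of_injOn f hcard hinj
    _ = n.choose h * (2 * n + 1) ^ g' := by
        rw [Finset.card_product, Finset.card_powersetCard]
        congr 1
        · congr 1
          rw [hT, Int.card_Icc]
          simp
        · rw [Fintype.card_piFinset]
          simp [Int.card_Icc]
          congr 1
          omega


lemma exists_low_bad (h g n s : ℕ) (hs : s ≤ n) :
    ∃ A ∈ Finset.powersetCard s (Finset.Icc (1 : ℤ) n),
      n.choose s * (badF h g A).card ≤
        (badF h g (Finset.Icc (1 : ℤ) n)).card * (n - g * h).choose (s - g * h) := by
  classical
  set T : Finset ℤ := Finset.Icc (1 : ℤ) n with hT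
  have hTcard : T.card = n := by rw [hT, Int.card_Icc]; simp
  set P := Finset.powersetCard s T with hP
  have hPcard : P.card = n.choose s := by rw [hP, Finset.card_powersetCard, hTcard]
  have hPne : P.Nonempty := by
    rw [hP]
    exact Finset.powersetCard_nonempty.mpr (by rw [hTcard]; exact hs)
  -- each A ∈ P has its bad sets among bad subsets of T
  have hbadA : ∀ A ∈ P, badF h g A = (badF h g T).filter (· ⊆ A) := by
    intro A hA
    have hAT : A ⊆ T := (Finset.mem_powersetCard.mp hA).1
    ext U
    simp only [mem_badF, Finset.mem_filter]
    constructor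
    · rintro ⟨hUA, hbad⟩
      exact ⟨⟨hUA.trans hAT, hbad⟩, hUA⟩
    · rintro ⟨⟨_, hbad⟩, hUA⟩
      exact ⟨hUA, hbad⟩
  -- bound for a single bad set U
  have hone : ∀ U ∈ badF h g T,
      (P.filter (fun A => U ⊆ A)).card ≤ (n - g * h).choose (s - g * h) := by
    intro U hU
    rw [mem_badF] at hU
    obtain ⟨hUT, hbad⟩ := hU
    have hUcard : U.card = g * h := hbad.card_eq
    have : (P.filter (fun A => U ⊆ A)).card ≤
        (Finset.powersetCard (s - g * h) (T \ U)).card := by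
      apply Finset.card_le_card_of_injOn (fun A => A \ U)
      · intro A hA
        rw [Finset.mem_coe, Finset.mem_filter, hP, Finset.mem_powersetCard] at hA
        obtain ⟨⟨hAT, hAcard⟩, hUA⟩ := hA
        rw [Finset.mem_coe, Finset.mem_powersetCard]
        refine ⟨Finset.sdiff_subset_sdiff hAT subset_rfl, ?_⟩
        rw [Finset.card_sdiff_of_subset hUA, hAcard, hUcard]
      · intro A₁ h₁ A₂ h₂ heq
        rw [Finset.mem_coe, Finset.mem_filter] at h₁ h₂
        calc A₁ = A₁ \ U ∪ U := (Finset.sdiff_union_of_subset h₁.2).symm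
          _ = A₂ \ U ∪ U := by simp only at heq; rw [heq]
          _ = A₂ := Finset.sdiff_union_of_subset h₂.2
    refine this.trans ?_
    rw [Finset.card_powersetCard, Finset.card_sdiff_of_subset hUT, hTcard, hUcard]
  -- sum over all A of bad counts
  have hsum : ∑ A ∈ P, (badF h g A).card ≤
      (badF h g T).card * (n - g * h).choose (s - g * h) := by
    calc ∑ A ∈ P, (badF h g A).card
        = ∑ A ∈ P, ∑ U ∈ badF h g T, (if U ⊆ A then 1 else 0) := by
          refine Finset.sum_congr rfl (fun A hA => ?_)
          rw [hbadA A hA, Finset.card_filter]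
      _ = ∑ U ∈ badF h g T, (P.filter (fun A => U ⊆ A)).card := by
          rw [Finset.sum_comm]
          exact Finset.sum_congr rfl (fun U _ => (Finset.card_filter _ _).symm)
      _ ≤ ∑ _U ∈ badF h g T, (n - g * h).choose (s - g * h) :=
          Finset.sum_le_sum hone
      _ = (badF h g T).card * (n - g * h).choose (s - g * h) := by
          rw [Finset.sum_const, smul_eq_mul]
  -- take the minimizer
  obtain ⟨A, hA, hmin⟩ := P.exists_min_image (fun A => (badF h g A).card) hPne
  refine ⟨A, hA, ?_⟩
  calc n.choose s * (badF h g A).card = ∑ _B ∈ P, (badF h g A).card := by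
        rw [Finset.sum_const, smul_eq_mul, hPcard]
    _ ≤ ∑ B ∈ P, (badF h g B).card := Finset.sum_le_sum (fun B hB => hmin B hB)
    _ ≤ _ := hsum


lemma nat_key (h g' n s : ℕ) (hh : 2 ≤ h)
    (hn : 2 * (h * (g' + 1)) ≤ n)
    (hkey : (2 ^ (h * (g' + 1) + 1) * 3 ^ g' * (h * (g' + 1)).factorial)
        * s ^ (h * (g' + 1) - 1) ≤ n ^ ((h - 1) * g')) :
    2 * (n.choose h * (2 * n + 1) ^ g' * s.choose (h * (g' + 1))) ≤
      s * n.choose (h * (g' + 1)) := by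
  obtain ⟨h0, rfl⟩ : ∃ h0, h = h0 + 1 := ⟨h - 1, by omega⟩
  set m := (h0 + 1) * (g' + 1) with hm
  have hm1 : 0 < m := Nat.mul_pos (Nat.succ_pos _) (Nat.succ_pos _)
  have hmn : m ≤ n := by omega
  have hn1 : 1 ≤ n := by omega
  have hpos : 0 < 2 ^ m * m.factorial := by positivity
  apply Nat.le_of_mul_le_mul_right _ hpos
  have hexp : (h0 + 1) + g' + (h0 + 1 - 1) * g' = m := by
    simp only [hm, Nat.add_sub_cancel]; ring
  calc 2 * (n.choose (h0 + 1) * (2 * n + 1) ^ g' * s.choose m) * (2 ^ m * m.factorial)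
      ≤ 2 * (n ^ (h0 + 1) * (3 * n) ^ g' * s ^ m) * (2 ^ m * m.factorial) := by
        gcongr
        · exact Nat.choose_le_pow _ _
        · omega
        · exact Nat.choose_le_pow _ _
    _ = (2 ^ (m + 1) * 3 ^ g' * m.factorial) * s ^ (m - 1) * n ^ ((h0 + 1) + g') * s := by
        rw [mul_pow]
        have : s ^ m = s ^ (m - 1) * s := by
          conv_lhs => rw [show m = (m - 1) + 1 by omega]
          rw [pow_succ]
        rw [this, pow_add, pow_succ]
        ring
    _ ≤ n ^ ((h0 + 1 - 1) * g') * n ^ ((h0 + 1) + g') * s := by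
        gcongr
    _ = n ^ m * s := by rw [← pow_add, ← hexp]; ring_nf
    _ ≤ (2 * (n + 1 - m)) ^ m * s := by
        gcongr
        omega
    _ = s * (2 ^ m * (n + 1 - m) ^ m) := by rw [mul_pow]; ring
    _ ≤ s * (2 ^ m * n.descFactorial m) := by
        gcongr
        exact Nat.pow_sub_le_descFactorial n m
    _ = s * n.choose m * (2 ^ m * m.factorial) := by
        rw [Nat.descFactorial_eq_factorial_mul_choose]
        ring



set_option maxHeartbeats 2000000 in
theorem stmt1 (g h : ℕ) (hgh : h ≤ g) (hh : 2 ≤ h) :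
    ∃ c : ℝ, 0 < c ∧ ∃ N : ℕ, ∀ n : ℕ, N ≤ n →
      ∃ A : Finset ℤ, ↑A ⊆ Set.Icc (1 : ℤ) n ∧ IsWeakChgSet h g ↑A ∧
        c * (n : ℝ) ^ ((1 - (1 : ℝ) / h) * (1 - (1 : ℝ) / g)
              * (1 + 1 / ((h : ℝ) * g - 1))) ≤ (A.card : ℝ) := by
  classical
  obtain ⟨g0, rfl⟩ : ∃ g0, g = g0 + 1 := ⟨g - 1, by omega⟩
  obtain ⟨h1, rfl⟩ : ∃ h1, h = h1 + 2 := ⟨h - 2, by omega⟩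
  set m : ℕ := (h1 + 2) * (g0 + 1) with hm
  set K : ℕ := 2 ^ (m + 1) * 3 ^ g0 * m.factorial with hK
  set ab : ℕ := (h1 + 2 - 1) * g0 with hab
  set q : ℕ := m - 1 with hq
  have hg1 : 1 ≤ g0 := by omega
  have hmval : m = h1 * g0 + h1 + 2 * g0 + 2 := by rw [hm]; ring
  have habval : ab = h1 * g0 + g0 := by
    have h21 : h1 + 2 - 1 = h1 + 1 := by omega
    rw [hab, h21]; ring
  have hm4 : 4 ≤ m := by omega
  have hq3 : 3 ≤ q := by omega
  have hab1 : 1 ≤ ab := by omega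
  have habq : ab ≤ q := by omega
  have hK1 : 0 < K := by positivity
  set α : ℝ := (ab : ℝ) / (q : ℝ) with hα
  have hα0 : 0 < α := by
    apply div_pos
    · exact_mod_cast hab1
    · exact_mod_cast (by omega : 0 < q)
  have hα1 : α ≤ 1 := by
    rw [hα, div_le_one (by exact_mod_cast (by omega : 0 < q))]
    exact_mod_cast habq
  set t : ℕ := ⌈1 / α⌉₊ with ht
  set L : ℕ := 2 * K * (m + 1) with hL
  have hL1 : 0 < L := by positivity
  refine ⟨1 / (4 * K), by positivity, max (2 * m) (L ^ t), fun n hn => ?_⟩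
  have hn2m : 2 * m ≤ n := le_trans (le_max_left _ _) hn
  have hnL : L ^ t ≤ n := le_trans (le_max_right _ _) hn
  have hn1 : 1 ≤ n := by omega
  -- the exponent equals α
  have hqval : q = h1 * g0 + h1 + 2 * g0 + 1 := by omega
  have hexp_eq : (1 - (1 : ℝ) / (h1 + 2 : ℕ)) * (1 - (1 : ℝ) / (g0 + 1 : ℕ))
      * (1 + 1 / (((h1 + 2 : ℕ) : ℝ) * ((g0 + 1 : ℕ) : ℝ) - 1)) = α := by
    have hcast1 : ((ab : ℕ) : ℝ) = ((h1 : ℝ) + 1) * (g0 : ℝ) := by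
      rw [habval]; push_cast; ring
    have hcast2 : ((q : ℕ) : ℝ) = (h1 : ℝ) * g0 + h1 + 2 * g0 + 1 := by
      rw [hqval]; push_cast; ring
    rw [hα, hcast1, hcast2]
    push_cast
    have hG : (0 : ℝ) ≤ (g0 : ℝ) := by positivity
    have hH : (0 : ℝ) ≤ (h1 : ℝ) := by positivity
    have d1 : ((h1 : ℝ) + 2) ≠ 0 := by positivity
    have d2 : ((g0 : ℝ) + 1) ≠ 0 := by positivity
    have d3 : ((h1 : ℝ) + 2) * ((g0 : ℝ) + 1) - 1 ≠ 0 := by nlinarith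
    have d4 : (h1 : ℝ) * g0 + h1 + 2 * g0 + 1 ≠ 0 := by positivity
    field_simp
    ring
  rw [hexp_eq]
  -- basic real facts
  set x : ℝ := (n : ℝ) ^ α with hx
  have hn0R : (0 : ℝ) ≤ (n : ℝ) := by positivity
  have hx0 : 0 < x := Real.rpow_pos_of_pos (by exact_mod_cast hn1) _
  have hxL : (L : ℝ) ≤ x := by
    have h1 : ((L : ℝ) ^ t) ^ α ≤ x := by
      rw [hx]
      apply Real.rpow_le_rpow (by positivity) _ (le_of_lt hα0)
      exact_mod_cast hnL
    have h2 : (L : ℝ) ≤ ((L : ℝ) ^ t) ^ α := by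
      rw [← Real.rpow_natCast (L : ℝ) t, ← Real.rpow_mul (by positivity)]
      have htα : 1 ≤ (t : ℝ) * α := by
        have := Nat.le_ceil (1 / α)
        calc (1 : ℝ) = (1 / α) * α := by field_simp
          _ ≤ (t : ℝ) * α := by
            apply mul_le_mul_of_nonneg_right _ (le_of_lt hα0)
            exact_mod_cast this
      calc (L : ℝ) = (L : ℝ) ^ (1 : ℝ) := by rw [Real.rpow_one]
        _ ≤ (L : ℝ) ^ ((t : ℝ) * α) := by
          apply Real.rpow_le_rpow_of_exponent_le (by exact_mod_cast hL1) htα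
    exact h2.trans h1
  set s : ℕ := ⌊x / K⌋₊ with hs
  have hKR : (0 : ℝ) < (K : ℝ) := by exact_mod_cast hK1
  have hsx : (s : ℝ) ≤ x / K := Nat.floor_le (by positivity)
  have hsx' : x / K - 1 < (s : ℝ) := Nat.sub_one_lt_floor _
  have hxK2 : 2 * (K : ℝ) * (m + 1) ≤ x := by
    calc 2 * (K : ℝ) * (m + 1) = (L : ℝ) := by rw [hL]; push_cast; ring
      _ ≤ x := hxL
  have hsm : m ≤ s := by
    have : (m : ℝ) < (s : ℝ) := by
      have h1 : x / K ≥ 2 * ((m : ℝ) + 1) := by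
        rw [ge_iff_le, le_div_iff₀ hKR]
        nlinarith
      nlinarith
    exact le_of_lt (by exact_mod_cast this)
  have hsn : s ≤ n := by
    have h1 : x / K ≤ (n : ℝ) := by
      calc x / K ≤ x := div_le_self (le_of_lt hx0) (by exact_mod_cast hK1)
          _ ≤ (n : ℝ) ^ (1 : ℝ) := Real.rpow_le_rpow_of_exponent_le
              (by exact_mod_cast hn1) hα1
          _ = (n : ℝ) := Real.rpow_one _
    calc s = ⌊x / K⌋₊ := rfl
      _ ≤ ⌊(n : ℝ)⌋₊ := Nat.floor_le_floor h1
      _ = n := Nat.floor_natCast n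
  -- key numeric inequality in ℕ
  have hkey : K * s ^ q ≤ n ^ ab := by
    have hreal : (K : ℝ) * (s : ℝ) ^ q ≤ (n : ℝ) ^ ab := by
      have h1 : (s : ℝ) ^ q ≤ (x / K) ^ q := by
        apply pow_le_pow_left₀ (by positivity) hsx
      have h2 : (K : ℝ) * (x / K) ^ q = x ^ q * ((K : ℝ) / (K : ℝ) ^ q) := by
        rw [div_pow]; field_simp
      have h3 : (K : ℝ) / (K : ℝ) ^ q ≤ 1 := by
        rw [div_le_one (by positivity)]
        exact le_self_pow₀ (by exact_mod_cast hK1) (by omega)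
      have h4 : x ^ q = (n : ℝ) ^ ab := by
        rw [hx, ← Real.rpow_natCast ((n : ℝ) ^ α) q, ← Real.rpow_mul hn0R,
          hα, div_mul_cancel₀, Real.rpow_natCast]
        exact_mod_cast (by omega : q ≠ 0)
      calc (K : ℝ) * (s : ℝ) ^ q ≤ (K : ℝ) * (x / K) ^ q := by
            apply mul_le_mul_of_nonneg_left h1 (le_of_lt hKR)
        _ = x ^ q * ((K : ℝ) / (K : ℝ) ^ q) := h2
        _ ≤ x ^ q * 1 := by
            apply mul_le_mul_of_nonneg_left h3 (by positivity)
        _ = (n : ℝ) ^ ab := by rw [mul_one, h4]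
    exact_mod_cast (by push_cast; exact hreal : ((K * s ^ q : ℕ) : ℝ) ≤ ((n ^ ab : ℕ) : ℝ))
  -- apply the key numeric inequality
  have hnk : 2 * (n.choose (h1 + 2) * (2 * n + 1) ^ g0 * s.choose ((h1 + 2) * (g0 + 1))) ≤
      s * n.choose ((h1 + 2) * (g0 + 1)) := by
    apply nat_key (h1 + 2) g0 n s (by omega) (by rw [← hm]; exact hn2m)
    rw [← hm]
    exact hkey
  rw [← hm] at hnk
  -- select a set of size s with few bad subsets
  obtain ⟨A, hA, hAbound⟩ := exists_low_bad (h1 + 2) (g0 + 1) n s hsn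
  rw [Finset.mem_powersetCard] at hA
  obtain ⟨hAsub, hAcard⟩ := hA
  have hmm : (g0 + 1) * (h1 + 2) = m := by rw [hm]; ring
  rw [hmm] at hAbound
  set bad := (badF (h1 + 2) (g0 + 1) A).card with hbad
  set B := (badF (h1 + 2) (g0 + 1) (Finset.Icc (1 : ℤ) (n : ℤ))).card with hBdef
  have hB : B ≤ n.choose (h1 + 2) * (2 * n + 1) ^ g0 := badF_card_le (h1 + 2) g0 n (by omega)
  have hid : n.choose s * s.choose m = n.choose m * (n - m).choose (s - m) :=
    Nat.choose_mul hsm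
  have step1 : n.choose m * bad ≤ B * s.choose m := by
    have h2 : n.choose s * (n.choose m * bad) ≤ n.choose s * (B * s.choose m) := by
      calc n.choose s * (n.choose m * bad) = n.choose m * (n.choose s * bad) := by ring
        _ ≤ n.choose m * (B * (n - m).choose (s - m)) := Nat.mul_le_mul_left _ hAbound
        _ = B * (n.choose m * (n - m).choose (s - m)) := by ring
        _ = B * (n.choose s * s.choose m) := by rw [← hid]
        _ = n.choose s * (B * s.choose m) := by ring
    exact Nat.le_of_mul_le_mul_left h2 (Nat.choose_pos hsn)
  have step2 : 2 * bad ≤ s := by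
    have h3 : 2 * bad * n.choose m ≤ s * n.choose m := by
      calc 2 * bad * n.choose m = 2 * (n.choose m * bad) := by ring
        _ ≤ 2 * (B * s.choose m) := Nat.mul_le_mul_left _ step1
        _ ≤ 2 * (n.choose (h1 + 2) * (2 * n + 1) ^ g0 * s.choose m) := by
            apply Nat.mul_le_mul_left
            exact Nat.mul_le_mul_right _ hB
        _ ≤ s * n.choose m := hnk
    exact Nat.le_of_mul_le_mul_right h3 (Nat.choose_pos (by omega : m ≤ n))
  -- delete one element from each bad subset
  set D := (badF (h1 + 2) (g0 + 1) A).image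
      (fun U => if hU : U.Nonempty then U.min' hU else 0) with hD
  refine ⟨A \ D, ?_, ?_, ?_⟩
  · intro z hz
    have hzA : z ∈ A := Finset.mem_sdiff.mp (by exact_mod_cast hz) |>.1
    have := hAsub hzA
    rw [Finset.mem_Icc] at this
    exact Set.mem_Icc.mpr this
  · apply weak_of_badF_empty
    rw [Finset.eq_empty_iff_forall_notMem]
    intro U hU
    rw [mem_badF] at hU
    obtain ⟨hUA', hbadU⟩ := hU
    have hUA : U ⊆ A := hUA'.trans Finset.sdiff_subset
    have hUbadA : U ∈ badF (h1 + 2) (g0 + 1) A := mem_badF.mpr ⟨hUA, hbadU⟩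
    have hUne : U.Nonempty := hbadU.nonempty (by omega) (by omega)
    have hmemD : U.min' hUne ∈ D := by
      rw [hD]
      exact Finset.mem_image.mpr ⟨U, hUbadA, by rw [dif_pos hUne]⟩
    have hmemA' : U.min' hUne ∈ A \ D := hUA' (U.min'_mem hUne)
    exact (Finset.mem_sdiff.mp hmemA').2 hmemD
  · have hDcard : D.card ≤ bad := Finset.card_image_le
    have hA'card : s - bad ≤ (A \ D).card := by
      calc s - bad ≤ A.card - D.card := by omega
        _ ≤ (A \ D).card := Finset.le_card_sdiff D A
    have h2A' : s ≤ 2 * (A \ D).card := by omega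
    have hcA' : (s : ℝ) ≤ 2 * ((A \ D).card : ℝ) := by exact_mod_cast h2A'
    have hmR : (0 : ℝ) ≤ (m : ℝ) := Nat.cast_nonneg m
    have hx2K : 2 * (K : ℝ) ≤ x := by
      have h5 : 2 * (K : ℝ) * 1 ≤ 2 * (K : ℝ) * ((m : ℝ) + 1) := by
        apply mul_le_mul_of_nonneg_left (by linarith) (by linarith)
      calc 2 * (K : ℝ) = 2 * (K : ℝ) * 1 := by ring
        _ ≤ 2 * (K : ℝ) * ((m : ℝ) + 1) := h5
        _ ≤ x := hxK2
    have hsx2 : x / (2 * K) ≤ (s : ℝ) := by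
      have e0 : x / K = 2 * (x / (2 * K)) := by
        rw [show (2 : ℝ) * (x / (2 * K)) = (2 * x) / (2 * K) from by ring]
        exact (mul_div_mul_left x (K : ℝ) two_ne_zero).symm
      have h1le : (1 : ℝ) ≤ x / (2 * K) := by
        rw [le_div_iff₀ (by positivity)]
        linarith
      linarith [hsx']
    have efin : (1 : ℝ) / (4 * K) * x = (x / (2 * K)) / 2 := by
      rw [div_div, one_div_mul_eq_div, show (2 : ℝ) * K * 2 = 4 * K from by ring]
    rw [efin]
    linarith
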